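/- Permutation maps on simplices are decomposable: for any permutation σ of {0,…,k}, there exist a chain-valued map ν on k-simplices that is a linear combination of maps with values in simplices of zero k-volume, and a geometric map ρ from k-simplices to (k+1)-chains, such that σ − sign(σ)·Id = ν + ∂ρ as maps from k-simplices to k-chains. Consequently, if ω is any closed and nonatomic k-germ, then ⟨σS, ω⟩ = sign(σ)·⟨S, ω⟩ for every k-simplex S. -/
import Mathlib


/-- The euclidean space `ℝ^d` in which simplices live. -/
abbrev Pt (d : ℕ) := EuclideanSpace ℝ (Fin d)

/-- The `k`-dimensional volume of a `k`-simplex `[p₀ … p_k]` in `ℝ^d`. -/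
noncomputable def vol {d k : ℕ} (S : Fin (k + 1) → Pt d) : ℝ :=
  (1 / (Nat.factorial k : ℝ)) *
    Real.sqrt (Matrix.det (Matrix.of fun i j : Fin k =>
      ∑ m : Fin d, (S i.succ m - S 0 m) * (S j.succ m - S 0 m)))

/-- The coboundary of a germ, dual to the alternating-sum boundary operator. -/
noncomputable def cobdry {d n : ℕ} (ω : (Fin n → Pt d) → ℝ) :
    (Fin (n + 1) → Pt d) → ℝ :=
  fun T => ∑ i : Fin (n + 1), (-1 : ℝ) ^ (i : ℕ) * ω (T ∘ i.succAbove)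

/-- The boundary of a `(k+1)`-simplex as a `k`-chain. -/
noncomputable def bdryChain {d k : ℕ} (S : Fin (k + 2) → Pt d) :
    (Fin (k + 1) → Pt d) →₀ ℝ :=
  ∑ i : Fin (k + 2), (-1 : ℝ) ^ (i : ℕ) • Finsupp.single (S ∘ i.succAbove) (1 : ℝ)


/-- vol vanishes if two vertices coincide. -/
lemma vol_eq_zero_of_eq {d k : ℕ} {S : Fin (k + 1) → Pt d} {a b : Fin (k + 1)}
    (hab : a ≠ b) (h : S a = S b) : vol S = 0 := by
  have hdet : Matrix.det (Matrix.of fun i j : Fin k =>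
      ∑ m : Fin d, (S i.succ m - S 0 m) * (S j.succ m - S 0 m)) = 0 := by
    rcases Fin.eq_zero_or_eq_succ a with ha | ⟨a', rfl⟩
    · rcases Fin.eq_zero_or_eq_succ b with hb | ⟨b', rfl⟩
      · exact absurd (ha.trans hb.symm) hab
      · subst ha
        apply Matrix.det_eq_zero_of_row_eq_zero b'
        intro j
        simp only [Matrix.of_apply]
        have : ∀ m, S b'.succ m - S 0 m = 0 := by
          intro m; rw [← h]; ring
        simp [this]
    · rcases Fin.eq_zero_or_eq_succ b with hb | ⟨b', rfl⟩
      · subst hb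
        apply Matrix.det_eq_zero_of_row_eq_zero a'
        intro j
        simp only [Matrix.of_apply]
        have : ∀ m, S a'.succ m - S 0 m = 0 := by
          intro m; rw [h]; ring
        simp [this]
      · apply Matrix.det_zero_of_row_eq (i := a') (j := b')
        · intro hc; exact hab (by rw [hc])
        · funext j
          simp only [Matrix.of_apply]
          congr 1
          funext m
          rw [show S a'.succ = S b'.succ from h]
  rw [vol, hdet, Real.sqrt_zero, mul_zero]

def Good (d k : ℕ) (σ : Equiv.Perm (Fin (k + 1))) : Prop :=
  ∃ (m₁ m₂ : ℕ) (a : Fin m₁ → ℝ)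
      (ν : Fin m₁ → (Fin (k + 1) → Pt d) → (Fin (k + 1) → Pt d))
      (b : Fin m₂ → ℝ)
      (ρ : Fin m₂ → (Fin (k + 1) → Pt d) → (Fin (k + 2) → Pt d)),
    (∀ j S, vol (ν j S) = 0) ∧
    (∀ j, Continuous (ρ j)) ∧
    (∀ j (φ : Pt d →ᵃ[ℝ] Pt d) (S : Fin (k + 1) → Pt d),
      ρ j (fun i => φ (S i)) = fun i => φ (ρ j S i)) ∧
    (∀ S : Fin (k + 1) → Pt d,
      Finsupp.single (S ∘ ⇑σ⁻¹) (1 : ℝ)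
          - ((Equiv.Perm.sign σ : ℤ) : ℝ) • Finsupp.single S (1 : ℝ)
        = (∑ j, a j • Finsupp.single (ν j S) (1 : ℝ))
          + ∑ j, b j • bdryChain (ρ j S))

lemma good_one (d k : ℕ) : Good d k 1 := by
  refine ⟨0, 0, Fin.elim0, Fin.elim0, Fin.elim0, Fin.elim0, ?_, ?_, ?_, ?_⟩
  · exact fun j => j.elim0
  · exact fun j => j.elim0
  · exact fun j => j.elim0
  · intro S
    simp

lemma good_mul {d k : ℕ} (τ π : Equiv.Perm (Fin (k + 1)))
    (hτ : Good d k τ) (hπ : Good d k π) : Good d k (τ * π) := by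
  obtain ⟨m₁, m₂, a, ν, b, ρ, hν, hρc, hρa, hmain⟩ := hτ
  obtain ⟨n₁, n₂, a', ν', b', ρ', hν', hρc', hρa', hmain'⟩ := hπ
  set s : ℝ := ((Equiv.Perm.sign τ : ℤ) : ℝ) with hs
  refine ⟨m₁ + n₁, m₂ + n₂,
    Fin.addCases a (fun j => s * a' j),
    Fin.addCases (fun j S => ν j (S ∘ ⇑π⁻¹)) ν',
    Fin.addCases b (fun j => s * b' j),
    Fin.addCases (fun j S => ρ j (S ∘ ⇑π⁻¹)) ρ', ?_, ?_, ?_, ?_⟩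
  · intro j S
    induction j using Fin.addCases with
    | left j => simp only [Fin.addCases_left]; exact hν j _
    | right j => simp only [Fin.addCases_right]; exact hν' j _
  · intro j
    induction j using Fin.addCases with
    | left j =>
      simp only [Fin.addCases_left]
      exact (hρc j).comp (continuous_pi fun i => continuous_apply _)
    | right j => simp only [Fin.addCases_right]; exact hρc' j
  · intro j φ S
    induction j using Fin.addCases with
    | left j =>
      simp only [Fin.addCases_left]
      exact hρa j φ (S ∘ ⇑π⁻¹)
    | right j => simp only [Fin.addCases_right]; exact hρa' j φ S
  · intro S
    have h1 := hmain (S ∘ ⇑π⁻¹)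
    have h2 := hmain' S
    have hcoe : S ∘ ⇑(τ * π)⁻¹ = (S ∘ ⇑π⁻¹) ∘ ⇑τ⁻¹ := by
      rw [mul_inv_rev]; rfl
    have hsign : ((Equiv.Perm.sign (τ * π) : ℤ) : ℝ)
        = s * ((Equiv.Perm.sign π : ℤ) : ℝ) := by
      rw [map_mul]; push_cast; ring
    rw [hcoe, hsign, Fin.sum_univ_add, Fin.sum_univ_add]
    simp only [Fin.addCases_left, Fin.addCases_right]
    have key : Finsupp.single ((S ∘ ⇑π⁻¹) ∘ ⇑τ⁻¹) (1 : ℝ)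
        - (s * ((Equiv.Perm.sign π : ℤ) : ℝ)) • Finsupp.single S (1 : ℝ)
        = (Finsupp.single ((S ∘ ⇑π⁻¹) ∘ ⇑τ⁻¹) (1 : ℝ)
            - s • Finsupp.single (S ∘ ⇑π⁻¹) (1 : ℝ))
          + s • (Finsupp.single (S ∘ ⇑π⁻¹) (1 : ℝ)
            - ((Equiv.Perm.sign π : ℤ) : ℝ) • Finsupp.single S (1 : ℝ)) := by
      rw [smul_sub, smul_smul]; abel
    rw [key, h1, h2, smul_add, Finset.smul_sum, Finset.smul_sum]
    simp only [smul_smul]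
    abel

lemma succAbove_val {n : ℕ} (j : Fin (n+1)) (l : Fin n) :
    ((j.succAbove l : Fin (n+1)) : ℕ) = if (l:ℕ) < (j:ℕ) then (l:ℕ) else (l:ℕ)+1 := by
  rw [Fin.succAbove]
  split_ifs with h1 h2 h3 <;> simp_all [Fin.lt_def]

def fidx (k i : ℕ) (hik : i + 1 < k + 1) (j : Fin (k + 2)) : Fin (k + 1) :=
  if h1 : (j:ℕ) ≤ i + 1 then ⟨(j:ℕ), by omega⟩
  else if h2 : (j:ℕ) = i + 2 then ⟨i, by omega⟩
  else ⟨(j:ℕ) - 1, by have := j.isLt; omega⟩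

lemma fidx_val (k i : ℕ) (hik : i + 1 < k + 1) (j : Fin (k + 2)) :
    ((fidx k i hik j : Fin (k+1)) : ℕ)
      = if (j:ℕ) ≤ i + 1 then (j:ℕ) else if (j:ℕ) = i + 2 then i else (j:ℕ) - 1 := by
  unfold fidx
  split_ifs <;> rfl

def Tmap (d k i : ℕ) (hik : i + 1 < k + 1) (S : Fin (k + 1) → Pt d) :
    Fin (k + 2) → Pt d := fun j => S (fidx k i hik j)

lemma good_adjacent {d k : ℕ} (i : ℕ) (hik : i + 1 < k + 1) :
    Good d k (Equiv.swap ⟨i, by omega⟩ ⟨i + 1, hik⟩) := by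
  set c : Fin (k + 1) := ⟨i, by omega⟩ with hc
  set c' : Fin (k + 1) := ⟨i + 1, hik⟩ with hc'
  have hcc' : c ≠ c' := by
    simp only [hc, hc', Ne, Fin.mk.injEq]; omega
  set A : Fin (k + 2) := ⟨i, by omega⟩ with hA
  set B : Fin (k + 2) := ⟨i + 2, by omega⟩ with hB
  have hABne : A ≠ B := by simp only [hA, hB, Ne, Fin.mk.injEq]; omega
  set T : (Fin (k + 1) → Pt d) → Fin (k + 2) → Pt d := Tmap d k i hik with hT
  -- swap values
  have hswapv : ∀ l : Fin (k + 1), ((Equiv.swap c c' l : Fin (k+1)) : ℕ)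
      = if (l:ℕ) = i then i + 1 else if (l:ℕ) = i + 1 then i else (l:ℕ) := by
    intro l
    rcases eq_or_ne l c with rfl | h1
    · simp [Equiv.swap_apply_left, hc, hc']
    · rcases eq_or_ne l c' with rfl | h2
      · have e1 : ((c' : Fin (k+1)) : ℕ) ≠ i := by simp [hc']
        simp [Equiv.swap_apply_right, hc, hc', e1]
      · rw [Equiv.swap_apply_of_ne_of_ne h1 h2]
        have e1 : (l:ℕ) ≠ i := fun h => h1 (Fin.ext (by simpa [hc] using h))
        have e2 : (l:ℕ) ≠ i + 1 := fun h => h2 (Fin.ext (by simpa [hc'] using h))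
        simp [e1, e2]
  -- the two honest faces
  have hfA : ∀ S : Fin (k+1) → Pt d, T S ∘ A.succAbove = S ∘ ⇑(Equiv.swap c c') := by
    intro S
    funext l
    show S (fidx k i hik (A.succAbove l)) = S (Equiv.swap c c' l)
    have he : fidx k i hik (A.succAbove l) = Equiv.swap c c' l := by
      apply Fin.ext
      rw [fidx_val, succAbove_val, hswapv]
      have h1 : ((A : Fin (k+2)) : ℕ) = i := rfl
      have := l.isLt
      rw [h1]
      split_ifs <;> omega
    rw [he]
  have hfB : ∀ S : Fin (k+1) → Pt d, T S ∘ B.succAbove = S := by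
    intro S
    funext l
    show S (fidx k i hik (B.succAbove l)) = S l
    have he : fidx k i hik (B.succAbove l) = l := by
      apply Fin.ext
      rw [fidx_val, succAbove_val]
      have h1 : ((B : Fin (k+2)) : ℕ) = i + 2 := rfl
      have := l.isLt
      rw [h1]
      split_ifs <;> omega
    rw [he]
  -- repeated vertex of T
  have hTc : ∀ S : Fin (k+1) → Pt d, T S A = S c ∧ T S B = S c := by
    intro S
    have heA : fidx k i hik A = c := by
      apply Fin.ext
      rw [fidx_val]
      show (if i ≤ i + 1 then i else if i = i + 2 then i else i - 1) = i
      split_ifs <;> omega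
    have heB : fidx k i hik B = c := by
      apply Fin.ext
      rw [fidx_val]
      show (if i + 2 ≤ i + 1 then i + 2 else if i + 2 = i + 2 then i else i + 2 - 1) = i
      split_ifs <;> omega
    exact ⟨congrArg S heA, congrArg S heB⟩
  -- degenerate faces
  have hdeg : ∀ (j : Fin (k+2)), j ≠ A → j ≠ B →
      ∀ S : Fin (k+1) → Pt d, vol (T S ∘ j.succAbove) = 0 := by
    intro j hjA hjB S
    obtain ⟨l₁, hl₁⟩ := Fin.exists_succAbove_eq (Ne.symm hjA)
    obtain ⟨l₂, hl₂⟩ := Fin.exists_succAbove_eq (Ne.symm hjB)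
    have hl : l₁ ≠ l₂ := by
      intro h; apply hABne; rw [← hl₁, ← hl₂, h]
    apply vol_eq_zero_of_eq hl
    show T S (j.succAbove l₁) = T S (j.succAbove l₂)
    rw [hl₁, hl₂, (hTc S).1, (hTc S).2]
  classical
  refine ⟨k + 2, 1,
    (fun j => if j = A ∨ j = B then 0 else -((-1:ℝ)^i * (-1:ℝ)^(j:ℕ))),
    (fun j S => if j = A ∨ j = B then (fun _ => S 0) else T S ∘ j.succAbove),
    (fun _ => (-1:ℝ)^i),
    (fun _ S => T S), ?_, ?_, ?_, ?_⟩
  · intro j S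
    show vol (if j = A ∨ j = B then (fun _ => S 0) else T S ∘ j.succAbove) = 0
    by_cases h : j = A ∨ j = B
    · rw [if_pos h]
      have h01 : (0 : Fin (k+1)) ≠ ⟨1, by omega⟩ := by
        simp [Fin.ext_iff]
      exact vol_eq_zero_of_eq h01 rfl
    · rw [if_neg h]
      push_neg at h
      exact hdeg j h.1 h.2 S
  · intro _
    exact continuous_pi fun j => continuous_apply (fidx k i hik j)
  · intro _ φ S
    funext j
    rfl
  · intro S
    have hsign : ((Equiv.Perm.sign (Equiv.swap c c') : ℤ) : ℝ) = -1 := by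
      rw [Equiv.Perm.sign_swap hcc']; simp
    have hinv : (Equiv.swap c c')⁻¹ = Equiv.swap c c' := Equiv.swap_inv c c'
    rw [hinv, hsign, Fin.sum_univ_one, bdryChain, Finset.smul_sum,
      ← Finset.sum_add_distrib]
    have hsummand : ∀ j : Fin (k+2),
        ((if j = A ∨ j = B then (0:ℝ) else -((-1:ℝ)^i * (-1:ℝ)^(j:ℕ))) •
          Finsupp.single (if j = A ∨ j = B then (fun _ => S 0) else T S ∘ j.succAbove) (1:ℝ))
        + (-1:ℝ)^i • ((-1:ℝ)^(j:ℕ) • Finsupp.single (T S ∘ j.succAbove) (1:ℝ))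
        = (if j = A then Finsupp.single (S ∘ ⇑(Equiv.swap c c')) (1:ℝ) else 0)
          + (if j = B then Finsupp.single S (1:ℝ) else 0) := by
      intro j
      by_cases hjA : j = A
      · subst hjA
        rw [if_pos (Or.inl rfl), zero_smul, zero_add, if_pos rfl, if_neg hABne,
          add_zero, smul_smul, hfA S]
        have hAi : ((A : Fin (k+2)) : ℕ) = i := rfl
        rw [hAi, ← pow_add]
        rw [Even.neg_one_pow ⟨i, rfl⟩, one_smul]
      · by_cases hjB : j = B
        · subst hjB
          rw [if_pos (Or.inr rfl), zero_smul, zero_add, if_neg (Ne.symm hABne),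
            if_pos rfl, zero_add, smul_smul, hfB S]
          have hBi : ((B : Fin (k+2)) : ℕ) = i + 2 := rfl
          rw [hBi, ← pow_add]
          rw [Even.neg_one_pow ⟨i + 1, by omega⟩, one_smul]
        · rw [if_neg (by tauto), if_neg (by tauto), if_neg hjA, if_neg hjB,
            smul_smul, ← add_smul]
          rw [show -((-1:ℝ)^i * (-1:ℝ)^(j:ℕ)) + (-1:ℝ)^i * (-1:ℝ)^(j:ℕ) = 0 by ring,
            zero_smul, add_zero]
    rw [Finset.sum_congr rfl (fun j _ => hsummand j), Finset.sum_add_distrib,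
      Finset.sum_ite_eq' Finset.univ A, Finset.sum_ite_eq' Finset.univ B]
    simp only [Finset.mem_univ, if_true]
    rw [neg_smul, one_smul, sub_neg_eq_add]

lemma good_swap_aux {d k : ℕ} (n : ℕ) :
    ∀ x y : Fin (k + 1), (x : ℕ) < (y : ℕ) → (y : ℕ) - (x : ℕ) ≤ n →
      Good d k (Equiv.swap x y) := by
  induction n with
  | zero => intro x y h1 h2; omega
  | succ n ih =>
    intro x y h1 h2
    by_cases hadj : (y : ℕ) = (x : ℕ) + 1
    · have hik : (x : ℕ) + 1 < k + 1 := by omega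
      have hx : x = ⟨(x : ℕ), x.isLt⟩ := rfl
      have hy : y = ⟨(x : ℕ) + 1, hik⟩ := by apply Fin.ext; simp [hadj]
      rw [hx, hy]
      exact good_adjacent _ hik
    · set m : Fin (k + 1) := ⟨(x : ℕ) + 1, by omega⟩ with hm
      have hxm : (x:ℕ) < (m:ℕ) := by simp [hm]
      have hmy : (m:ℕ) < (y:ℕ) := by simp [hm]; omega
      have g1 : Good d k (Equiv.swap m y) := ih m y hmy (by simp [hm]; omega)
      have g2 : Good d k (Equiv.swap x m) := ih x m hxm (by simp [hm]; omega)
      have hdecomp : Equiv.swap x y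
          = Equiv.swap m y * Equiv.swap x m * Equiv.swap m y := by
        have hxm' : x ≠ m := by intro h; rw [h] at hxm; omega
        have hxy' : x ≠ y := by intro h; rw [h] at h1; omega
        have h1' : Equiv.swap m y x = x :=
          Equiv.swap_apply_of_ne_of_ne hxm' hxy'
        have h2' : Equiv.swap m y m = y := Equiv.swap_apply_left m y
        calc Equiv.swap x y = Equiv.swap (Equiv.swap m y x) (Equiv.swap m y m) := by
              rw [h1', h2']
          _ = Equiv.swap m y * Equiv.swap x m * (Equiv.swap m y)⁻¹ :=
              Equiv.swap_apply_apply (Equiv.swap m y) x m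
          _ = Equiv.swap m y * Equiv.swap x m * Equiv.swap m y := by
              rw [Equiv.swap_inv]
      rw [hdecomp]
      exact good_mul _ _ (good_mul _ _ g1 g2) g1

lemma good_swap {d k : ℕ} (x y : Fin (k + 1)) (hxy : x ≠ y) :
    Good d k (Equiv.swap x y) := by
  rcases lt_trichotomy (x : ℕ) (y : ℕ) with h | h | h
  · exact good_swap_aux ((y:ℕ) - (x:ℕ)) x y h le_rfl
  · exact absurd (Fin.ext h) hxy
  · rw [Equiv.swap_comm]
    exact good_swap_aux ((x:ℕ) - (y:ℕ)) y x h le_rfl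

lemma good_all {d k : ℕ} (σ : Equiv.Perm (Fin (k + 1))) : Good d k σ := by
  refine Equiv.Perm.swap_induction_on σ (good_one d k) ?_
  intro f x y hxy hf
  exact good_mul _ _ (good_swap x y hxy) hf

/-- Permutation maps on simplices are decomposable: for any permutation `σ` of
`{0,…,k}` there are a linear combination `ν = Σⱼ aⱼ νⱼ` of simplex-valued maps,
each `νⱼ` taking values in simplices of zero `k`-volume, and a linear combination
`ρ = Σⱼ bⱼ ρⱼ` of geometric (continuous, commuting with affine push-forwards)
maps into `(k+1)`-simplices, such that `σ − sign(σ)·Id = ν + ∂ρ` as maps from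
`k`-simplices to `k`-chains. Consequently every closed nonatomic `k`-germ `ω`
satisfies `⟨σS, ω⟩ = sign(σ)·⟨S, ω⟩`. -/
theorem perm_decomposable {d k : ℕ} (σ : Equiv.Perm (Fin (k + 1))) :
    (∃ (m₁ m₂ : ℕ) (a : Fin m₁ → ℝ)
        (ν : Fin m₁ → (Fin (k + 1) → Pt d) → (Fin (k + 1) → Pt d))
        (b : Fin m₂ → ℝ)
        (ρ : Fin m₂ → (Fin (k + 1) → Pt d) → (Fin (k + 2) → Pt d)),
      (∀ j S, vol (ν j S) = 0) ∧
      (∀ j, Continuous (ρ j)) ∧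
      (∀ j (φ : Pt d →ᵃ[ℝ] Pt d) (S : Fin (k + 1) → Pt d),
        ρ j (fun i => φ (S i)) = fun i => φ (ρ j S i)) ∧
      (∀ S : Fin (k + 1) → Pt d,
        Finsupp.single (S ∘ ⇑σ⁻¹) (1 : ℝ)
            - ((Equiv.Perm.sign σ : ℤ) : ℝ) • Finsupp.single S (1 : ℝ)
          = (∑ j, a j • Finsupp.single (ν j S) (1 : ℝ))
            + ∑ j, b j • bdryChain (ρ j S)))
    ∧ (∀ ω : (Fin (k + 1) → Pt d) → ℝ,
        (∀ T : Fin (k + 2) → Pt d, cobdry ω T = 0) →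
        (∀ S : Fin (k + 1) → Pt d, vol S = 0 → ω S = 0) →
        ∀ S : Fin (k + 1) → Pt d,
          ω (S ∘ ⇑σ⁻¹) = ((Equiv.Perm.sign σ : ℤ) : ℝ) * ω S) := by
  obtain ⟨m₁, m₂, a, ν, b, ρ, hν, hρc, hρa, hmain⟩ := good_all (d := d) σ
  refine ⟨⟨m₁, m₂, a, ν, b, ρ, hν, hρc, hρa, hmain⟩, ?_⟩
  intro ω hclosed hatom S
  have hL : ∀ T : Fin (k + 2) → Pt d,
      Finsupp.linearCombination ℝ ω (bdryChain T) = cobdry ω T := by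
    intro T
    rw [bdryChain, map_sum, cobdry]
    refine Finset.sum_congr rfl fun j _ => ?_
    rw [map_smul, Finsupp.linearCombination_single, one_smul, smul_eq_mul]
  have h := congrArg (Finsupp.linearCombination ℝ ω) (hmain S)
  rw [map_sub, map_smul, map_add, map_sum, map_sum] at h
  simp only [map_smul, Finsupp.linearCombination_single, one_smul, smul_eq_mul,
    hL] at h
  simp only [fun j => hatom (ν j S) (hν j S), fun j => hclosed (ρ j S),
    mul_zero, Finset.sum_const_zero, add_zero] at h
  linarith [h]
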